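/- Let B be an H-module algebra with action ▷ and A an ideal of B. Suppose there exists a linear projection π: H▷A → H▷A with image A such that π(h▷(a·π(k▷b))) = Σ π(h₁▷a)·π(h₂k▷b) for all h,k ∈ H and a,b ∈ A. Then the map h ⇀ a := π(h▷a) defines a partial action of H on A. -/
import Mathlib


open TensorProduct

section PartialHopfPrelude

variable (k : Type) [Field k] (H : Type) [Ring H] [HopfAlgebra k H]

/-- Sweedler-style sum `Σ f h₁ h₂` over the comultiplication of `h`. -/
noncomputable def sweedler {M : Type} [AddCommGroup M] [Module k M]
    (f : H →ₗ[k] H →ₗ[k] M) (h : H) : M :=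
  TensorProduct.lift f (Coalgebra.comul h)

variable {A : Type} [AddCommGroup A] [Module k A]

/-- `Σ (h₁ · a) * (h₂ g · b)`, with an explicit multiplication `mA` on `A`. -/
noncomputable def paRhs (mA : A →ₗ[k] A →ₗ[k] A) (act : H →ₗ[k] A →ₗ[k] A)
    (h g : H) (a b : A) : A :=
  sweedler k H ((mA.comp (act.flip a)).compl₂ ((act.flip b).comp (LinearMap.mulRight k g))) h

/-- `Σ (h₁ g · b) * (h₂ · a)`, with an explicit multiplication `mA` on `A`. -/
noncomputable def paSymmRhs (mA : A →ₗ[k] A →ₗ[k] A) (act : H →ₗ[k] A →ₗ[k] A)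
    (h g : H) (a b : A) : A :=
  sweedler k H ((mA.comp ((act.flip b).comp (LinearMap.mulRight k g))).compl₂ (act.flip a)) h

/-- A (left) partial action of the Hopf algebra `H` on `A`, where the (possibly nonunital,
possibly nonassociative) multiplication of `A` is given explicitly as a bilinear map `mA`:
`1_H · a = a` and `h · (a (g · b)) = Σ (h₁ · a)(h₂ g · b)`. -/
structure IsPartialActionOn (mA : A →ₗ[k] A →ₗ[k] A) (act : H →ₗ[k] A →ₗ[k] A) : Prop where
  one_act : ∀ a : A, act 1 a = a
  act_assoc : ∀ (h g : H) (a b : A), act h (mA a (act g b)) = paRhs k H mA act h g a b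

/-- A symmetrical partial action: additionally `h · ((g · b) a) = Σ (h₁ g · b)(h₂ · a)`. -/
structure IsSymmPartialActionOn (mA : A →ₗ[k] A →ₗ[k] A) (act : H →ₗ[k] A →ₗ[k] A)
    extends IsPartialActionOn k H mA act : Prop where
  act_symm : ∀ (h g : H) (a b : A), act h (mA (act g b) a) = paSymmRhs k H mA act h g a b

variable {B : Type} [NonUnitalRing B] [Module k B] [SMulCommClass k B B] [IsScalarTower k B B]

/-- A partial action of `H` on the nonunital algebra `B` (with its own multiplication). -/
def IsPartialAction (act : H →ₗ[k] B →ₗ[k] B) : Prop :=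
  IsPartialActionOn k H (LinearMap.mul k B) act

/-- A symmetrical partial action of `H` on the nonunital algebra `B`. -/
def IsSymmPartialAction (act : H →ₗ[k] B →ₗ[k] B) : Prop :=
  IsSymmPartialActionOn k H (LinearMap.mul k B) act

end PartialHopfPrelude

section ModuleAlgebraPrelude

variable (k : Type) [Field k] (H : Type) [Ring H] [HopfAlgebra k H]
variable {B : Type} [NonUnitalRing B] [Module k B] [SMulCommClass k B B] [IsScalarTower k B B]

/-- `B` is an `H`-module algebra (possibly nonunital) for the global action `gact`:
`1 ▷ b = b`, `h ▷ (b c) = Σ (h₁ ▷ b)(h₂ ▷ c)` and `h ▷ (g ▷ b) = (h g) ▷ b`. -/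
structure IsModuleAlgebra (gact : H →ₗ[k] B →ₗ[k] B) : Prop where
  one_act : ∀ b : B, gact 1 b = b
  act_mul : ∀ (h : H) (b c : B),
    gact h (b * c) =
      sweedler k H (((LinearMap.mul k B).comp (gact.flip b)).compl₂ (gact.flip c)) h
  act_act : ∀ (h g : H) (b : B), gact h (gact g b) = gact (h * g) b

end ModuleAlgebraPrelude

section Stmt10

variable {k : Type} [Field k] {H : Type} [Ring H] [HopfAlgebra k H]
variable {B : Type} [NonUnitalRing B] [Module k B] [SMulCommClass k B B] [IsScalarTower k B B]

/-- Let `B` be an `H`-module algebra with action `▷` and `A` an ideal of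
`B`.  If there is a linear projection `π : H ▷ A → H ▷ A`, with image `A`, such that
`π(h ▷ (a π(g ▷ b))) = Σ π(h₁ ▷ a) π(h₂ g ▷ b)` for all `h, g ∈ H`, `a, b ∈ A`, then
`h ⇀ a = π(h ▷ a)` defines a partial action of `H` on `A`. -/

lemma sweedler_map {k : Type} [Field k] {H : Type} [Ring H] [HopfAlgebra k H]
    {M N : Type} [AddCommGroup M] [Module k M] [AddCommGroup N] [Module k N]
    (ι : M →ₗ[k] N) (f : H →ₗ[k] H →ₗ[k] M) (h : H) :
    ι (sweedler k H f h) = sweedler k H ((LinearMap.llcomp k H M N ι).comp f) h := by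
  unfold sweedler
  induction Coalgebra.comul (R := k) h using TensorProduct.induction_on with
  | zero => simp
  | tmul x y => simp
  | add x y hx hy => simp [map_add, hx, hy]

theorem projection_induces_partial_action
    (gact : H →ₗ[k] B →ₗ[k] B) (hma : IsModuleAlgebra k H gact)
    (A : NonUnitalSubalgebra k B)
    (hIdl : ∀ (b : B) (x : B), x ∈ A → b * x ∈ A ∧ x * b ∈ A)
    (π : B →ₗ[k] B)
    (hπA : ∀ x ∈ Submodule.span k {y : B | ∃ (h : H), ∃ a ∈ A, y = gact h a}, π x ∈ A)
    (hπproj : ∀ a ∈ A, π a = a)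
    (hπcompat : ∀ (h g : H), ∀ a ∈ A, ∀ b ∈ A,
      π (gact h (a * π (gact g b))) =
        sweedler k H
          (((LinearMap.mul k B).comp (π.comp (gact.flip a))).compl₂
            ((π.comp (gact.flip b)).comp (LinearMap.mulRight k g))) h) :
    ∃ pact : H →ₗ[k] ↥A →ₗ[k] ↥A,
      (∀ (h : H) (a : ↥A), (pact h a : B) = π (gact h (a : B))) ∧
      IsPartialAction k H pact := by
  have hmem : ∀ (h : H) (a : B), a ∈ A → π (gact h a) ∈ A := fun h a ha =>
    hπA _ (Submodule.subset_span ⟨h, a, ha, rfl⟩)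
  let f : H →ₗ[k] ↥A →ₗ[k] B := (gact.compl₂ A.toSubmodule.subtype).compr₂ π
  let pact : H →ₗ[k] ↥A →ₗ[k] ↥A :=
    { toFun := fun h => LinearMap.codRestrict A.toSubmodule (f h) (fun a => hmem h a a.2)
      map_add' := fun h g => by
        refine LinearMap.ext fun a => ?_
        apply Subtype.ext
        show f (h + g) a = (f h a + f g a : B)
        rw [map_add, LinearMap.add_apply]
      map_smul' := fun c h => by
        refine LinearMap.ext fun a => ?_
        apply Subtype.ext
        show f (c • h) a = (c • f h a : B)
        rw [map_smul, LinearMap.smul_apply] }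
  refine ⟨pact, fun h a => rfl, ?_, ?_⟩
  · intro a
    apply Subtype.ext
    show π (gact 1 (a : B)) = a
    rw [hma.one_act, hπproj _ a.2]
  · intro h g a b
    apply Subtype.ext
    show π (gact h (((a * pact g b : ↥A) : B))) =
      (A.toSubmodule.subtype (paRhs k H (LinearMap.mul k ↥A) pact h g a b))
    have hcoe : ((a * pact g b : ↥A) : B) = (a : B) * π (gact g (b : B)) := rfl
    rw [hcoe, hπcompat h g a a.2 b b.2]
    unfold paRhs
    rw [sweedler_map]
    congr 1

end Stmt10
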